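/- Fix an integer k ≥ 1. A partial k-Dyck path is a word over {U, D} where U contributes +k to the height and D contributes −1, such that every prefix has nonnegative height. Let F ∈ ℚ⟦z, u⟧ be the bivariate formal power series in which the coefficient of z^n u^j is the number of nonempty partial k-Dyck paths whose last letter is U, having exactly n letters U and final height j (this number is finite for each n, j). Let ū ∈ ℚ⟦z⟧ be the unique formal power series with constant coefficient 1 satisfying 1 − ū + z ū^{k+1} = 0. Then F · (1 − u + z u^{k+1}) = z u^k (ū − u) in ℚ⟦z, u⟧. -/

import Mathlib

noncomputable section

/-- A step of a `k`-Dyck path: up (height change `+k`) or down (height change `-1`). -/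
inductive KStep : Type
  | up : KStep
  | down : KStep
  deriving DecidableEq

/-- Height change of a step of a `k`-Dyck path. -/
def KStep.wt (k : ℕ) : KStep → ℤ
  | .up => (k : ℤ)
  | .down => -1

/-- Total height change of a word of steps. -/
def kHeight (k : ℕ) (p : List KStep) : ℤ := (p.map (KStep.wt k)).sum

/-- The number of nonempty partial `k`-Dyck paths whose last letter is an up-step,
with exactly `n` up-steps and final height `j` (every prefix has nonnegative height). -/
def kDyckCount (k n j : ℕ) : ℕ :=
  Nat.card {p : List KStep // p ≠ [] ∧ p.getLast? = some KStep.up ∧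
    p.count KStep.up = n ∧ (∀ q, q <+: p → 0 ≤ kHeight k q) ∧ kHeight k p = (j : ℤ)}

namespace KDyckAux

instance : Fintype KStep := ⟨{.up, .down}, fun x => by cases x <;> simp⟩

/-- prefix-nonnegative words -/
def Pre (k : ℕ) (p : List KStep) : Prop := ∀ q, q <+: p → 0 ≤ kHeight k q

def S (k n j : ℕ) : Set (List KStep) :=
  {p | Pre k p ∧ p.count KStep.up = n ∧ kHeight k p = (j : ℤ)}

def g (k n j : ℕ) : ℕ := (S k n j).ncard

lemma kHeight_nil (k : ℕ) : kHeight k [] = 0 := rfl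

lemma kHeight_concat (k : ℕ) (p : List KStep) (a : KStep) :
    kHeight k (p ++ [a]) = kHeight k p + KStep.wt k a := by
  simp [kHeight]

lemma kHeight_cons (k : ℕ) (a : KStep) (t : List KStep) :
    kHeight k (a :: t) = KStep.wt k a + kHeight k t := by
  simp [kHeight]

lemma kHeight_eq (k : ℕ) (p : List KStep) :
    kHeight k p = (k : ℤ) * p.count KStep.up - p.count KStep.down := by
  induction p with
  | nil => simp [kHeight]
  | cons a t ih =>
    rw [kHeight_cons, ih]
    cases a <;> simp [List.count_cons, KStep.wt] <;> push_cast <;> ring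

lemma length_eq (p : List KStep) : p.length = p.count KStep.up + p.count KStep.down := by
  induction p with
  | nil => simp
  | cons a t ih => cases a <;> simp [List.count_cons, ih] <;> omega

lemma S_finite (k n j : ℕ) : (S k n j).Finite := by
  apply (List.finite_length_le KStep (n * (k + 1))).subset
  rintro p ⟨hpre, hcu, hh⟩
  have h1 := kHeight_eq k p
  rw [hh, hcu] at h1
  have h2 : (p.count KStep.down : ℤ) ≤ (k : ℤ) * n := by omega
  have h3 : p.count KStep.down ≤ k * n := by exact_mod_cast h2
  have h4 := length_eq p
  simp only [Set.mem_setOf_eq]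
  rw [h4, hcu]; nlinarith

lemma pre_concat (k : ℕ) (q : List KStep) (a : KStep) :
    Pre k (q ++ [a]) ↔ Pre k q ∧ 0 ≤ kHeight k (q ++ [a]) := by
  constructor
  · intro h
    exact ⟨fun r hr => h r (hr.trans (q.prefix_append [a])), h _ List.prefix_rfl⟩
  · rintro ⟨h, ha⟩ r hr
    rcases List.prefix_concat_iff.mp hr with rfl | hr
    · exact ha
    · exact h r hr

lemma mem_S_concat_down {k n j : ℕ} {q : List KStep} :
    q ++ [KStep.down] ∈ S k n j ↔ q ∈ S k n (j + 1) := by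
  constructor
  · rintro ⟨hpre, hcu, hh⟩
    rw [pre_concat] at hpre
    rw [kHeight_concat] at hh
    refine ⟨hpre.1, by simpa using hcu, ?_⟩
    simp only [KStep.wt] at hh
    push_cast
    omega
  · rintro ⟨hpre, hcu, hh⟩
    have hh' : kHeight k (q ++ [KStep.down]) = (j : ℤ) := by
      rw [kHeight_concat, hh]; simp only [KStep.wt]; push_cast; ring
    refine ⟨(pre_concat k q _).mpr ⟨hpre, by rw [hh']; positivity⟩, by simpa using hcu, hh'⟩

lemma concat_up_mem_S {k n j : ℕ} {q : List KStep} (h : q ++ [KStep.up] ∈ S k n j) :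
    k ≤ j ∧ 1 ≤ n ∧ q ∈ S k (n - 1) (j - k) := by
  obtain ⟨hpre, hcu, hh⟩ := h
  rw [pre_concat] at hpre
  rw [kHeight_concat] at hh
  simp [KStep.wt] at hh
  have hq0 : 0 ≤ kHeight k q := hpre.1 q List.prefix_rfl
  have hkj : k ≤ j := by omega
  have hn : 1 ≤ n := by
    simp [List.count_append] at hcu; omega
  refine ⟨hkj, hn, hpre.1, ?_, ?_⟩
  · simp [List.count_append] at hcu; omega
  · push_cast [Nat.cast_sub hkj]; omega

lemma mem_S_concat_up {k n j : ℕ} (hkj : k ≤ j) (hn : 1 ≤ n) {q : List KStep}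
    (h : q ∈ S k (n - 1) (j - k)) : q ++ [KStep.up] ∈ S k n j := by
  obtain ⟨hpre, hcu, hh⟩ := h
  have hh' : kHeight k (q ++ [KStep.up]) = (j : ℤ) := by
    rw [kHeight_concat, hh]; simp [KStep.wt]
    push_cast [Nat.cast_sub hkj]; ring
  refine ⟨(pre_concat k q _).mpr ⟨hpre, by rw [hh']; positivity⟩, ?_, hh'⟩
  simp [List.count_append, hcu]; omega

lemma S_eq_union (k n j : ℕ) :
    S k n j = ((if n = 0 ∧ j = 0 then {([] : List KStep)} else ∅)
      ∪ ((· ++ [KStep.down]) '' S k n (j + 1)))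
      ∪ (if k ≤ j ∧ 1 ≤ n then (· ++ [KStep.up]) '' S k (n - 1) (j - k) else ∅) := by
  ext p
  constructor
  · intro hp
    rcases p.eq_nil_or_concat with rfl | ⟨q, a, rfl⟩
    · obtain ⟨-, hcu, hh⟩ := hp
      simp [kHeight_nil] at hcu hh
      have hj : j = 0 := by exact_mod_cast hh.symm
      left; left
      simp [← hcu, hj]
    · rw [List.concat_eq_append] at hp ⊢
      cases a
      · obtain ⟨h1, h2, h3⟩ := concat_up_mem_S hp
        right
        rw [if_pos ⟨h1, h2⟩]
        exact ⟨q, h3, rfl⟩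
      · left; right
        exact ⟨q, mem_S_concat_down.mp hp, rfl⟩
  · intro hp
    rcases hp with (he | ⟨q, hq, rfl⟩) | hu
    · have h1 : n = 0 ∧ j = 0 := by
        by_contra h; rw [if_neg h] at he; exact he
      rw [if_pos h1] at he
      rcases he with rfl
      exact ⟨fun r hr => by simp [List.prefix_nil.mp hr, kHeight_nil], by simp [h1.1],
        by simp [kHeight_nil, h1.2]⟩
    · exact mem_S_concat_down.mpr hq
    · have h1 : k ≤ j ∧ 1 ≤ n := by
        by_contra h; rw [if_neg h] at hu; exact hu
      rw [if_pos h1] at hu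
      obtain ⟨q, hq, rfl⟩ := hu
      exact mem_S_concat_up h1.1 h1.2 hq

lemma g_rec (k n j : ℕ) :
    g k n j = (if n = 0 ∧ j = 0 then 1 else 0) + g k n (j + 1)
      + (if k ≤ j ∧ 1 ≤ n then g k (n - 1) (j - k) else 0) := by
  have fin1 : (if n = 0 ∧ j = 0 then ({([] : List KStep)} : Set (List KStep)) else ∅).Finite := by
    split_ifs <;> simp
  have fin2 : ((· ++ [KStep.down]) '' S k n (j + 1)).Finite := (S_finite k n (j + 1)).image _
  have fin3 : (if k ≤ j ∧ 1 ≤ n then (· ++ [KStep.up]) '' S k (n - 1) (j - k) else ∅).Finite := by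
    split_ifs
    · exact (S_finite k (n - 1) (j - k)).image _
    · simp
  have disj1 : Disjoint (if n = 0 ∧ j = 0 then ({([] : List KStep)} : Set (List KStep)) else ∅)
      ((· ++ [KStep.down]) '' S k n (j + 1)) := by
    rw [Set.disjoint_left]
    rintro p hp ⟨q, -, rfl⟩
    split_ifs at hp
    · simp at hp
    · exact hp
  have disj2 : Disjoint ((if n = 0 ∧ j = 0 then ({([] : List KStep)} : Set (List KStep)) else ∅)
      ∪ ((· ++ [KStep.down]) '' S k n (j + 1)))
      (if k ≤ j ∧ 1 ≤ n then (· ++ [KStep.up]) '' S k (n - 1) (j - k) else ∅) := by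
    rw [Set.disjoint_left]
    rintro p hp hu
    split_ifs at hu
    · obtain ⟨q, -, rfl⟩ := hu
      rcases hp with he | ⟨r, -, hr⟩
      · split_ifs at he
        · simp at he
        · exact he
      · have := congrArg List.getLast? hr
        simp [List.getLast?_concat] at this
    · exact hu
  rw [g, S_eq_union k n j, Set.ncard_union_eq disj2 (fin1.union fin2) fin3,
    Set.ncard_union_eq disj1 fin1 fin2]
  congr 1
  · congr 1
    · split_ifs <;> simp
    · rw [Set.ncard_image_of_injective _ (List.append_left_injective [KStep.down])]; rfl
  · split_ifs with h
    · rw [Set.ncard_image_of_injective _ (List.append_left_injective [KStep.up])]; rfl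
    · simp

lemma g_eq_zero {k n j : ℕ} (h : k * n < j) : g k n j = 0 := by
  have : S k n j = ∅ := by
    ext p
    simp only [Set.mem_empty_iff_false, iff_false]
    rintro ⟨-, hcu, hh⟩
    rw [kHeight_eq, hcu] at hh
    have : (j : ℤ) ≤ (k : ℤ) * n := by omega
    have : j ≤ k * n := by exact_mod_cast this
    omega
  rw [g, this, Set.ncard_empty]

lemma kDyckCount_eq (k n j : ℕ) :
    kDyckCount k n j = if k ≤ j ∧ 1 ≤ n then g k (n - 1) (j - k) else 0 := by
  have hset : {p : List KStep | p ≠ [] ∧ p.getLast? = some KStep.up ∧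
      p.count KStep.up = n ∧ (∀ q, q <+: p → 0 ≤ kHeight k q) ∧ kHeight k p = (j : ℤ)}
      = (if k ≤ j ∧ 1 ≤ n then (· ++ [KStep.up]) '' S k (n - 1) (j - k) else ∅) := by
    ext p
    constructor
    · rintro ⟨hne, hlast, hcu, hpre, hh⟩
      rcases p.eq_nil_or_concat with rfl | ⟨q, a, rfl⟩
      · exact absurd rfl hne
      · rw [List.concat_eq_append] at hlast hcu hpre hh ⊢
        rw [List.getLast?_concat] at hlast
        obtain rfl : a = KStep.up := by injection hlast
        obtain ⟨h1, h2, h3⟩ := concat_up_mem_S (⟨hpre, hcu, hh⟩ : q ++ [KStep.up] ∈ S k n j)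
        rw [if_pos ⟨h1, h2⟩]
        exact ⟨q, h3, rfl⟩
    · intro hp
      have h1 : k ≤ j ∧ 1 ≤ n := by
        by_contra h; rw [if_neg h] at hp; exact hp
      rw [if_pos h1] at hp
      obtain ⟨q, hq, rfl⟩ := hp
      obtain ⟨hpre, hcu, hh⟩ := mem_S_concat_up h1.1 h1.2 hq
      exact ⟨by simp, List.getLast?_concat, hcu, hpre, hh⟩
  have key : Nat.card {p : List KStep // p ≠ [] ∧ p.getLast? = some KStep.up ∧
      p.count KStep.up = n ∧ (∀ q, q <+: p → 0 ≤ kHeight k q) ∧ kHeight k p = (j : ℤ)}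
      = ({p : List KStep | p ≠ [] ∧ p.getLast? = some KStep.up ∧
      p.count KStep.up = n ∧ (∀ q, q <+: p → 0 ≤ kHeight k q) ∧ kHeight k p = (j : ℤ)}
      : Set (List KStep)).ncard := Nat.card_coe_set_eq _
  show Nat.card {p : List KStep // p ≠ [] ∧ p.getLast? = some KStep.up ∧
      p.count KStep.up = n ∧ (∀ q, q <+: p → 0 ≤ kHeight k q) ∧ kHeight k p = (j : ℤ)} = _
  rw [key, hset]
  split_ifs with h
  · rw [Set.ncard_image_of_injective _ (List.append_left_injective [KStep.up])]; rfl
  · simp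

open PowerSeries in
def Gz (k j : ℕ) : PowerSeries ℚ := PowerSeries.mk fun n => (g k n j : ℚ)

open PowerSeries in
lemma Gz_rec (k j : ℕ) :
    Gz k j = (if j = 0 then 1 else 0) + Gz k (j + 1)
      + (if k ≤ j then X * Gz k (j - k) else 0) := by
  ext n
  have h3 : (PowerSeries.coeff (R := ℚ) n) (X * Gz k (j - k))
      = if 1 ≤ n then ((g k (n - 1) (j - k) : ℚ)) else 0 := by
    cases n with
    | zero => simp [PowerSeries.coeff_zero_eq_constantCoeff]
    | succ m => simp [PowerSeries.coeff_succ_X_mul, Gz]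
  simp only [map_add, Gz, PowerSeries.coeff_mk, apply_ite (PowerSeries.coeff (R := ℚ) n),
    PowerSeries.coeff_one, map_zero, h3]
  rw [g_rec k n j]
  push_cast
  split_ifs <;> simp_all [Gz]

lemma coeff_mul_K (k : ℕ) (f : PowerSeries (PowerSeries ℚ)) (m : ℕ) :
    (PowerSeries.coeff (R := PowerSeries ℚ) (m + 1)) (f * (1 - PowerSeries.X
        + PowerSeries.C (R := PowerSeries ℚ) PowerSeries.X * PowerSeries.X ^ (k + 1)))
      = PowerSeries.coeff (R := PowerSeries ℚ) (m + 1) f - PowerSeries.coeff (R := PowerSeries ℚ) m f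
        + (if k ≤ m then PowerSeries.X * PowerSeries.coeff (R := PowerSeries ℚ) (m - k) f else 0) := by
  have e1 : f * (1 - PowerSeries.X
        + PowerSeries.C (R := PowerSeries ℚ) PowerSeries.X * PowerSeries.X ^ (k + 1))
      = f - PowerSeries.X * f
        + PowerSeries.C (R := PowerSeries ℚ) PowerSeries.X * (f * PowerSeries.X ^ (k + 1)) := by
    ring
  rw [e1, map_add, map_sub, PowerSeries.coeff_succ_X_mul, PowerSeries.coeff_C_mul,
    PowerSeries.coeff_mul_X_pow']
  by_cases h : k ≤ m
  · rw [if_pos (by omega : k + 1 ≤ m + 1), if_pos h, Nat.succ_sub_succ]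
  · rw [if_neg (by omega : ¬ k + 1 ≤ m + 1), if_neg h, mul_zero]

lemma coeff_zero_mul_K (k : ℕ) (f : PowerSeries (PowerSeries ℚ)) :
    (PowerSeries.coeff (R := PowerSeries ℚ) 0) (f * (1 - PowerSeries.X
        + PowerSeries.C (R := PowerSeries ℚ) PowerSeries.X * PowerSeries.X ^ (k + 1)))
      = PowerSeries.coeff (R := PowerSeries ℚ) 0 f := by
  have e1 : f * (1 - PowerSeries.X
        + PowerSeries.C (R := PowerSeries ℚ) PowerSeries.X * PowerSeries.X ^ (k + 1))
      = f - PowerSeries.X * f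
        + PowerSeries.C (R := PowerSeries ℚ) PowerSeries.X * (f * PowerSeries.X ^ (k + 1)) := by
    ring
  rw [e1, map_add, map_sub, PowerSeries.coeff_C_mul, PowerSeries.coeff_mul_X_pow']
  simp [PowerSeries.coeff_zero_eq_constantCoeff, map_mul]

lemma GK (k : ℕ) : PowerSeries.mk (Gz k) * (1 - PowerSeries.X
      + PowerSeries.C (R := PowerSeries ℚ) PowerSeries.X * PowerSeries.X ^ (k + 1))
    = PowerSeries.C (R := PowerSeries ℚ) (Gz k 0) - PowerSeries.X := by
  ext j
  cases j with
  | zero =>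
    rw [coeff_zero_mul_K, map_sub, PowerSeries.coeff_mk]
    simp
  | succ m =>
    rw [coeff_mul_K, map_sub, PowerSeries.coeff_mk, PowerSeries.coeff_mk, PowerSeries.coeff_mk,
      PowerSeries.coeff_C, PowerSeries.coeff_X, Gz_rec k m]
    split_ifs <;> simp_all <;> ring

end KDyckAux

open KDyckAux

local notation "Cq" => PowerSeries.C (R := PowerSeries ℚ)

/-- let `F ∈ ℚ⟦z,u⟧` (realized as `ℚ⟦z⟧⟦u⟧`) have as coefficient of
`z^n u^j` the number of nonempty partial `k`-Dyck paths ending with an up-step, with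
`n` up-steps and final height `j`, and let `ū` be the Fuss–Catalan series, the unique
power series with constant coefficient 1 satisfying `1 - ū + z ū^{k+1} = 0`.
Then `F (1 - u + z u^{k+1}) = z u^k (ū - u)`. -/
theorem kdyck_kernel_equation (k : ℕ) (hk : 1 ≤ k)
    (ubar : PowerSeries ℚ)
    (h0 : PowerSeries.constantCoeff (R := ℚ) ubar = 1)
    (hker : 1 - ubar + PowerSeries.X * ubar ^ (k + 1) = 0) :
    (PowerSeries.mk fun j => PowerSeries.mk fun n => (kDyckCount k n j : ℚ)) *
        (1 - PowerSeries.X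
          + PowerSeries.C (R := PowerSeries ℚ) PowerSeries.X * PowerSeries.X ^ (k + 1)) =
      PowerSeries.C (R := PowerSeries ℚ) PowerSeries.X * PowerSeries.X ^ k *
        (PowerSeries.C (R := PowerSeries ℚ) ubar - PowerSeries.X) := by
  classical
  set Sg : PowerSeries (PowerSeries ℚ) :=
    ∑ i ∈ Finset.range (k + 1), Cq (ubar ^ (k - i)) * PowerSeries.X ^ i with hSgdef
  have h1 : Sg * (PowerSeries.X - Cq ubar)
      = PowerSeries.X ^ (k + 1) - (Cq ubar) ^ (k + 1) := by
    have hg := geom_sum₂_mul (PowerSeries.X : PowerSeries (PowerSeries ℚ)) (Cq ubar) (k + 1)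
    have hS : Sg = ∑ i ∈ Finset.range (k + 1),
        (PowerSeries.X : PowerSeries (PowerSeries ℚ)) ^ i * (Cq ubar) ^ (k + 1 - 1 - i) := by
      rw [hSgdef]
      apply Finset.sum_congr rfl
      intro i hi
      rw [map_pow, mul_comm]
      congr 2 <;> omega
    rw [hS, hg]
  have hC : (1 : PowerSeries (PowerSeries ℚ)) - Cq ubar
      + Cq PowerSeries.X * (Cq ubar) ^ (k + 1) = 0 := by
    have h := congrArg Cq hker
    rwa [map_add, map_sub, map_one, map_mul, map_pow, map_zero] at h
  have hfact : (Cq ubar - PowerSeries.X) * (1 - Cq PowerSeries.X * Sg)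
      = 1 - PowerSeries.X + Cq PowerSeries.X * PowerSeries.X ^ (k + 1) := by
    linear_combination Cq PowerSeries.X * h1 - hC
  have hM : IsUnit (1 - Cq PowerSeries.X * Sg) := by
    rw [PowerSeries.isUnit_iff_constantCoeff]
    have hcS : PowerSeries.constantCoeff (R := PowerSeries ℚ) Sg = ubar ^ k := by
      rw [hSgdef, map_sum]
      rw [Finset.sum_eq_single 0]
      · simp
      · intro i hi hne
        simp [PowerSeries.constantCoeff_X, zero_pow hne]
      · simp
    rw [map_sub, map_one, map_mul, hcS]
    rw [PowerSeries.constantCoeff_C]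
    rw [PowerSeries.isUnit_iff_constantCoeff]
    simp
  set N : PowerSeries (PowerSeries ℚ) := ↑hM.unit⁻¹ with hNdef0
  have hMN : (1 - Cq PowerSeries.X * Sg) * N = 1 := hM.mul_val_inv
  have hNK : N * (1 - PowerSeries.X + Cq PowerSeries.X * PowerSeries.X ^ (k + 1))
      = Cq ubar - PowerSeries.X := by
    calc N * (1 - PowerSeries.X + Cq PowerSeries.X * PowerSeries.X ^ (k + 1))
        = (Cq ubar - PowerSeries.X) * ((1 - Cq PowerSeries.X * Sg) * N) := by
          rw [← hfact]; ring
      _ = Cq ubar - PowerSeries.X := by rw [hMN, mul_one]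
  have hNdef : N = 1 + Cq PowerSeries.X * (Sg * N) := by linear_combination hMN
  have hSg : ∀ i, PowerSeries.coeff (R := PowerSeries ℚ) i Sg
      = if i ≤ k then ubar ^ (k - i) else 0 := by
    intro i
    rw [hSgdef, map_sum]
    simp only [PowerSeries.coeff_C_mul, PowerSeries.coeff_X_pow, mul_ite, mul_one, mul_zero]
    rw [Finset.sum_ite_eq (Finset.range (k + 1)) i (fun m => ubar ^ (k - m))]
    simp [Nat.lt_succ_iff]
  have hN0 : ∀ n j, k * n < j →
      PowerSeries.coeff (R := ℚ) n (PowerSeries.coeff (R := PowerSeries ℚ) j N) = 0 := by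
    intro n
    induction n using Nat.strong_induction_on with
    | _ n IH =>
      intro j hj
      have hj0 : j ≠ 0 := by rintro rfl; exact absurd hj (Nat.not_lt_zero _)
      conv_lhs => rw [hNdef]
      rw [map_add, PowerSeries.coeff_one, if_neg hj0, zero_add, PowerSeries.coeff_C_mul]
      cases n with
      | zero =>
        simp [PowerSeries.coeff_zero_eq_constantCoeff, map_mul]
      | succ m =>
        rw [PowerSeries.coeff_succ_X_mul, PowerSeries.coeff_mul, map_sum]
        apply Finset.sum_eq_zero
        rintro ⟨a, b⟩ hab
        replace hab : a + b = j := Finset.HasAntidiagonal.mem_antidiagonal.mp hab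
        dsimp only
        rw [hSg a]
        by_cases ha : a ≤ k
        · rw [if_pos ha, PowerSeries.coeff_mul]
          apply Finset.sum_eq_zero
          rintro ⟨c, d⟩ hcd
          replace hcd : c + d = m := Finset.HasAntidiagonal.mem_antidiagonal.mp hcd
          dsimp only
          have hd : d ≤ m := by omega
          have h2 : k * d ≤ k * m := Nat.mul_le_mul_left k hd
          rw [Nat.mul_succ] at hj
          have h4 : k * d < b := by
            have hb : k * m + k < a + b := hab ▸ hj
            have : k * m < b := by omega
            omega
          rw [IH d (by omega) b h4, mul_zero]
        · rw [if_neg ha, zero_mul, map_zero]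
  have hGv : ∀ n j, k * n < j →
      PowerSeries.coeff (R := ℚ) n
        (PowerSeries.coeff (R := PowerSeries ℚ) j (PowerSeries.mk (Gz k))) = 0 := by
    intro n j hj
    rw [PowerSeries.coeff_mk, Gz, PowerSeries.coeff_mk, g_eq_zero hj]
    simp
  -- the difference vanishes
  set D : PowerSeries (PowerSeries ℚ) := PowerSeries.mk (Gz k) - N with hDdef
  have hDK : D * (1 - PowerSeries.X + Cq PowerSeries.X * PowerSeries.X ^ (k + 1))
      = Cq (Gz k 0) - Cq ubar := by
    rw [hDdef, sub_mul, GK k, hNK]; ring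
  have hrecD : ∀ m, PowerSeries.coeff (R := PowerSeries ℚ) (m + 1) D
      = PowerSeries.coeff (R := PowerSeries ℚ) m D
        - (if k ≤ m then PowerSeries.X * PowerSeries.coeff (R := PowerSeries ℚ) (m - k) D else 0) := by
    intro m
    have h := coeff_mul_K k D m
    rw [hDK, map_sub, PowerSeries.coeff_C, PowerSeries.coeff_C, if_neg (Nat.succ_ne_zero m),
      if_neg (Nat.succ_ne_zero m), sub_zero] at h
    linear_combination - h
  have hDzero : ∀ n j, PowerSeries.coeff (R := ℚ) n (PowerSeries.coeff (R := PowerSeries ℚ) j D) = 0 := by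
    intro n
    induction n using Nat.strong_induction_on with
    | _ n IH =>
      have hconst : ∀ m, PowerSeries.coeff (R := ℚ) n (PowerSeries.coeff (R := PowerSeries ℚ) (m + 1) D)
          = PowerSeries.coeff (R := ℚ) n (PowerSeries.coeff (R := PowerSeries ℚ) m D) := by
        intro m
        rw [hrecD m, map_sub]
        have hz : PowerSeries.coeff (R := ℚ) n
            (if k ≤ m then PowerSeries.X * PowerSeries.coeff (R := PowerSeries ℚ) (m - k) D else 0)
            = 0 := by
          split_ifs
          · cases n with
            | zero => simp [PowerSeries.coeff_zero_eq_constantCoeff, map_mul]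
            | succ m' => rw [PowerSeries.coeff_succ_X_mul, IH m' (Nat.lt_succ_self m')]
          · exact map_zero _
        rw [hz, sub_zero]
      have hall : ∀ j, PowerSeries.coeff (R := ℚ) n (PowerSeries.coeff (R := PowerSeries ℚ) j D)
          = PowerSeries.coeff (R := ℚ) n (PowerSeries.coeff (R := PowerSeries ℚ) 0 D) := by
        intro j
        induction j with
        | zero => rfl
        | succ m ih => rw [hconst m, ih]
      have hbig : PowerSeries.coeff (R := ℚ) n (PowerSeries.coeff (R := PowerSeries ℚ) (k * n + 1) D) = 0 := by
        rw [hDdef, map_sub, map_sub, hGv n _ (Nat.lt_succ_self _), hN0 n _ (Nat.lt_succ_self _),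
          sub_zero]
      intro j
      rw [hall j, ← hall (k * n + 1), hbig]
  have hGN : PowerSeries.mk (Gz k) = N := by
    apply PowerSeries.ext; intro j
    apply PowerSeries.ext; intro n
    have h := hDzero n j
    rw [hDdef, map_sub, map_sub] at h
    exact sub_eq_zero.mp h
  have hGKfinal : PowerSeries.mk (Gz k) * (1 - PowerSeries.X
        + Cq PowerSeries.X * PowerSeries.X ^ (k + 1)) = Cq ubar - PowerSeries.X := by
    rw [hGN, hNK]
  have hF : (PowerSeries.mk fun j => PowerSeries.mk fun n => (kDyckCount k n j : ℚ))
      = Cq PowerSeries.X * PowerSeries.X ^ k * PowerSeries.mk (Gz k) := by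
    ext j n
    rw [PowerSeries.coeff_mk, mul_assoc, PowerSeries.coeff_C_mul,
      mul_comm (PowerSeries.X ^ k) (PowerSeries.mk (Gz k)), PowerSeries.coeff_mul_X_pow',
      PowerSeries.coeff_mk, kDyckCount_eq]
    by_cases hkj : k ≤ j
    · rw [if_pos hkj, PowerSeries.coeff_mk]
      cases n with
      | zero =>
        rw [if_neg (by omega)]
        simp [PowerSeries.coeff_zero_eq_constantCoeff, map_mul]
      | succ m =>
        rw [if_pos ⟨hkj, by omega⟩, PowerSeries.coeff_succ_X_mul, Gz, PowerSeries.coeff_mk]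
        simp
    · rw [if_neg hkj, if_neg (by tauto), mul_zero, map_zero, Nat.cast_zero]
  rw [hF, mul_assoc, hGKfinal]
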